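/- Let c > 0 and let d : ℝ → ℝ be twice differentiable on [0, π/√c] with d(0) = 0 and d'(0) = 1, satisfying d''(s) = −F(s)·d(s) on [0, π/√c] for a continuous function F with F(s) ≥ c for all s ∈ [0, π/√c]. Then there exists s* ∈ (0, π/√c] with d(s*) = 0. -/

import Mathlib

open Set

/-- Conjugate-point existence (1D Jacobi-equation form of Hawking–Ellis
Prop. 4.4.1): if `d'' = -F·d` with `F ≥ c > 0` on `[0, π/√c]` and vertex
initial conditions `d 0 = 0`, `d' 0 = 1`, then `d` vanishes again at some
point of `(0, π/√c]`. -/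
theorem conjugate_point_exists
    (c : ℝ) (hc : 0 < c) (d d' d'' F : ℝ → ℝ)
    (hd : ∀ s ∈ Icc (0:ℝ) (Real.pi / Real.sqrt c),
      HasDerivWithinAt d (d' s) (Icc (0:ℝ) (Real.pi / Real.sqrt c)) s)
    (hd' : ∀ s ∈ Icc (0:ℝ) (Real.pi / Real.sqrt c),
      HasDerivWithinAt d' (d'' s) (Icc (0:ℝ) (Real.pi / Real.sqrt c)) s)
    (h0 : d 0 = 0) (h1 : d' 0 = 1)
    (heq : ∀ s ∈ Icc (0:ℝ) (Real.pi / Real.sqrt c), d'' s = -F s * d s)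
    (hFc : Continuous F)
    (hF : ∀ s ∈ Icc (0:ℝ) (Real.pi / Real.sqrt c), c ≤ F s) :
    ∃ s ∈ Ioc (0:ℝ) (Real.pi / Real.sqrt c), d s = 0 := by
  by_contra hcon
  push_neg at hcon
  set L : ℝ := Real.pi / Real.sqrt c with hLdef
  have hsc : 0 < Real.sqrt c := Real.sqrt_pos.mpr hc
  have hL : 0 < L := div_pos Real.pi_pos hsc
  have hscL : Real.sqrt c * L = Real.pi := by
    rw [hLdef]
    field_simp
  have hcont : ContinuousOn d (Icc 0 L) := fun s hs => (hd s hs).continuousWithinAt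
  -- find a point near 0 where d is positive
  have hslope : Filter.Tendsto (slope d 0) (nhdsWithin 0 (Icc (0:ℝ) L \ {0})) (nhds 1) := by
    have := (hd 0 ⟨le_refl 0, hL.le⟩)
    rw [hasDerivWithinAt_iff_tendsto_slope] at this
    rw [h1] at this
    exact this
  have hne : (nhdsWithin (0:ℝ) (Icc (0:ℝ) L \ {0})).NeBot := by
    rw [← mem_closure_iff_nhdsWithin_neBot]
    have : Icc (0:ℝ) L \ {0} = Ioc 0 L := by
      ext x
      simp only [mem_diff, mem_Icc, mem_singleton_iff, mem_Ioc]
      constructor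
      · rintro ⟨⟨h1x, h2x⟩, h3x⟩; exact ⟨lt_of_le_of_ne h1x (Ne.symm h3x), h2x⟩
      · rintro ⟨h1x, h2x⟩; exact ⟨⟨h1x.le, h2x⟩, ne_of_gt h1x⟩
    rw [this, closure_Ioc hL.ne]
    exact ⟨le_refl 0, hL.le⟩
  obtain ⟨s₀, hs₀slope, hs₀mem⟩ :=
    ((hslope.eventually (eventually_gt_nhds (by norm_num : (1:ℝ)/2 < 1))).and
      self_mem_nhdsWithin).exists
  have hs₀pos : 0 < s₀ := lt_of_le_of_ne hs₀mem.1.1 (Ne.symm hs₀mem.2)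
  have hs₀le : s₀ ≤ L := hs₀mem.1.2
  have hds₀ : 0 < d s₀ := by
    have : slope d 0 s₀ = d s₀ / s₀ := by
      simp [slope_def_field, h0]
    rw [this] at hs₀slope
    have := mul_pos (lt_trans (by norm_num) hs₀slope) hs₀pos
    rwa [div_mul_cancel₀ _ hs₀pos.ne'] at this
  -- d is nonnegative on [0, L]
  have hnonneg : ∀ s ∈ Icc (0:ℝ) L, 0 ≤ d s := by
    intro t ht
    by_contra hneg
    push_neg at hneg
    have htne : t ≠ 0 := by
      intro h; rw [h, h0] at hneg; exact lt_irrefl 0 hneg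
    have ht' : t ∈ Ioc (0:ℝ) L := ⟨lt_of_le_of_ne ht.1 (Ne.symm htne), ht.2⟩
    -- IVT between s₀ and t
    rcases le_total s₀ t with hst | hst
    · have hsub : Icc s₀ t ⊆ Icc (0:ℝ) L := Icc_subset_Icc hs₀pos.le ht.2
      obtain ⟨z, hz, hz0⟩ := intermediate_value_Icc' hst (hcont.mono hsub)
        (⟨hneg.le, hds₀.le⟩ : (0:ℝ) ∈ Icc (d t) (d s₀))
      exact hcon z ⟨lt_of_lt_of_le hs₀pos hz.1, le_trans hz.2 ht.2⟩ hz0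
    · have hsub : Icc t s₀ ⊆ Icc (0:ℝ) L := Icc_subset_Icc ht.1 hs₀le
      obtain ⟨z, hz, hz0⟩ := intermediate_value_Icc hst (hcont.mono hsub)
        (⟨hneg.le, hds₀.le⟩ : (0:ℝ) ∈ Icc (d t) (d s₀))
      exact hcon z ⟨lt_of_lt_of_le ht'.1 hz.1, le_trans hz.2 hs₀le⟩ hz0
  have hdL : 0 < d L := by
    have h1' := hnonneg L ⟨hL.le, le_refl L⟩
    have h2' := hcon L ⟨hL, le_refl L⟩
    exact lt_of_le_of_ne h1' (Ne.symm h2')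
  -- Wronskian W = d' * sin(√c s) - d * (√c cos(√c s))
  set W : ℝ → ℝ := fun s => d' s * Real.sin (Real.sqrt c * s)
      - d s * (Real.sqrt c * Real.cos (Real.sqrt c * s)) with hWdef
  have hWderiv : ∀ s ∈ Icc (0:ℝ) L,
      HasDerivWithinAt W ((c - F s) * d s * Real.sin (Real.sqrt c * s)) (Icc 0 L) s := by
    intro s hs
    have hlin : HasDerivAt (fun x => Real.sqrt c * x) (Real.sqrt c) s := by
      simpa using (hasDerivAt_id s).const_mul (Real.sqrt c)
    have hsin : HasDerivAt (fun x => Real.sin (Real.sqrt c * x))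
        (Real.cos (Real.sqrt c * s) * Real.sqrt c) s := hlin.sin
    have hcos : HasDerivAt (fun x => Real.sqrt c * Real.cos (Real.sqrt c * x))
        (Real.sqrt c * (-Real.sin (Real.sqrt c * s) * Real.sqrt c)) s :=
      hlin.cos.const_mul (Real.sqrt c)
    have hW : HasDerivWithinAt W
        ((d'' s * Real.sin (Real.sqrt c * s) + d' s * (Real.cos (Real.sqrt c * s) * Real.sqrt c))
          - (d' s * (Real.sqrt c * Real.cos (Real.sqrt c * s))
            + d s * (Real.sqrt c * (-Real.sin (Real.sqrt c * s) * Real.sqrt c))))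
        (Icc 0 L) s :=
      ((hd' s hs).mul (hsin.hasDerivWithinAt)).sub ((hd s hs).mul (hcos.hasDerivWithinAt))
    have hval : (d'' s * Real.sin (Real.sqrt c * s) + d' s * (Real.cos (Real.sqrt c * s) * Real.sqrt c))
          - (d' s * (Real.sqrt c * Real.cos (Real.sqrt c * s))
            + d s * (Real.sqrt c * (-Real.sin (Real.sqrt c * s) * Real.sqrt c)))
        = (c - F s) * d s * Real.sin (Real.sqrt c * s) := by
      rw [heq s hs]
      linear_combination (d s * Real.sin (Real.sqrt c * s)) * (Real.sq_sqrt hc.le)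
    rwa [hval] at hW
  -- W is antitone on [0, L]
  have hWcont : ContinuousOn W (Icc 0 L) := fun s hs => (hWderiv s hs).continuousWithinAt
  have hWanti : AntitoneOn W (Icc 0 L) := by
    apply antitoneOn_of_deriv_nonpos (convex_Icc 0 L) hWcont
    · intro x hx
      rw [interior_Icc] at hx
      have hx' : x ∈ Icc (0:ℝ) L := ⟨hx.1.le, hx.2.le⟩
      have hmem : Icc (0:ℝ) L ∈ nhds x := Icc_mem_nhds hx.1 hx.2
      exact ((hWderiv x hx').hasDerivAt hmem).differentiableAt.differentiableWithinAt
    · intro x hx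
      rw [interior_Icc] at hx
      have hx' : x ∈ Icc (0:ℝ) L := ⟨hx.1.le, hx.2.le⟩
      have hmem : Icc (0:ℝ) L ∈ nhds x := Icc_mem_nhds hx.1 hx.2
      have hda := (hWderiv x hx').hasDerivAt hmem
      rw [hda.deriv]
      have hsinpos : 0 ≤ Real.sin (Real.sqrt c * x) := by
        apply Real.sin_nonneg_of_nonneg_of_le_pi
        · exact mul_nonneg hsc.le hx.1.le
        · rw [← hscL]
          exact mul_le_mul_of_nonneg_left hx.2.le hsc.le
      have hcF : c - F x ≤ 0 := sub_nonpos.mpr (hF x hx')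
      have hdx : 0 ≤ d x := hnonneg x hx'
      have := mul_nonneg hdx hsinpos
      nlinarith
  have hW0 : W 0 = 0 := by
    simp [hWdef, h0]
  have hWL : W L = Real.sqrt c * d L := by
    simp only [hWdef]
    rw [hscL, Real.sin_pi, Real.cos_pi]
    ring
  have hle : W L ≤ W 0 := hWanti ⟨le_refl 0, hL.le⟩ ⟨hL.le, le_refl L⟩ hL.le
  rw [hW0, hWL] at hle
  nlinarith [mul_pos hsc hdL]
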